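/- Let F and θ be integers with 1 ≤ θ and F > 2θ. For ρ ∈ (0, 2^{−F}), let μ_ρ be the probability distribution on the hypercube {0,1}^F defined by μ_ρ(u_−) = μ_ρ(u_+) = 1/2 − (2^{F−1} − 1)·ρ and μ_ρ(u) = ρ for every u ∉ {u_−, u_+}, where u_− = (0,…,0) and u_+ = (1,…,1). Let X and Y be independent random elements of {0,1}^F, each with distribution μ_ρ, and let h_θ(j) := −j for 0 ≤ j ≤ θ and h_θ(j) := j − 2θ for θ < j ≤ F. Then there exists ρ₀ ∈ (0, 2^{−F}] such that for every ρ ∈ (0, ρ₀), E[h_θ(H(X,Y))] > 0. -/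

import Mathlib

open MeasureTheory ProbabilityTheory

/-- Hamming distance on the hypercube `{0,1}^F`. -/
def hammingDist' {F : ℕ} (u v : Fin F → Bool) : ℕ :=
  (Finset.univ.filter fun i => u i ≠ v i).card

/-- The biased distribution on `{0,1}^F`: the two opposite profiles `u₋ = (0,…,0)` and
`u₊ = (1,…,1)` have mass `1/2 − (2^{F−1} − 1)ρ`, every other profile has mass `ρ`. -/
noncomputable def biasedDist (F : ℕ) (ρ : ℝ) (u : Fin F → Bool) : ℝ :=
  if u = (fun _ => false) ∨ u = (fun _ => true) then
    1/2 - ((2 : ℝ) ^ (F - 1) - 1) * ρ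
  else ρ

/-- The weight function `h_θ`. -/
noncomputable def hWeight (θ j : ℕ) : ℝ :=
  if j ≤ θ then -(j : ℝ) else (j : ℝ) - 2 * (θ : ℝ)

noncomputable def gsum (F θ : ℕ) (ρ : ℝ) : ℝ :=
  ∑ u : Fin F → Bool, ∑ v : Fin F → Bool,
    biasedDist F ρ u * biasedDist F ρ v * hWeight θ (hammingDist' u v)

lemma gsum_continuous (F θ : ℕ) : Continuous (gsum F θ) := by
  unfold gsum
  apply continuous_finset_sum; intro u _
  apply continuous_finset_sum; intro v _
  have h : ∀ w : Fin F → Bool, Continuous (fun ρ => biasedDist F ρ w) := by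
    intro w
    unfold biasedDist
    by_cases hw : w = (fun _ => false) ∨ w = (fun _ => true) <;> simp [hw] <;> fun_prop
  exact ((h u).mul (h v)).mul continuous_const

lemma hammingDist'_self {F : ℕ} (u : Fin F → Bool) : hammingDist' u u = 0 := by
  simp [hammingDist']

lemma hammingDist'_opp {F : ℕ} :
    hammingDist' (fun _ : Fin F => false) (fun _ => true) = F := by
  simp [hammingDist']

lemma hammingDist'_opp' {F : ℕ} :
    hammingDist' (fun _ : Fin F => true) (fun _ => false) = F := by
  simp [hammingDist']

lemma gsum_zero (F θ : ℕ) (hθ : 1 ≤ θ) (hF : 2 * θ < F) :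
    gsum F θ 0 = ((F : ℝ) - 2 * θ) / 2 := by
  have hF0 : 0 < F := by omega
  have hne : (fun _ : Fin F => false) ≠ (fun _ => true) := by
    intro h
    have := congrFun h ⟨0, hF0⟩
    simp at this
  set um : Fin F → Bool := fun _ => false with hum
  set up : Fin F → Bool := fun _ => true with hup
  have hzero : ∀ u : Fin F → Bool, ¬(u = um ∨ u = up) → biasedDist F 0 u = 0 := by
    intro u hu; rw [hum, hup] at hu; simp [biasedDist, hu]
  have hval : ∀ u : Fin F → Bool, (u = um ∨ u = up) → biasedDist F 0 u = 1/2 := by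
    intro u hu; rw [hum, hup] at hu; simp [biasedDist, hu]
  have hθF : ¬ (F ≤ θ) := by omega
  have hpair : ∀ g : (Fin F → Bool) → ℝ,
      (∀ u, ¬(u = um ∨ u = up) → g u = 0) →
      ∑ u : Fin F → Bool, g u = g um + g up := by
    intro g hg
    rw [← Finset.sum_subset (Finset.subset_univ {um, up})]
    · exact Finset.sum_pair hne
    · intro x _ hx
      apply hg
      simpa using hx
  rw [gsum, hpair _ (by
    intro u hu
    apply Finset.sum_eq_zero
    intro v _
    rw [hzero u hu]; ring)]
  rw [hpair _ (by intro v hv; rw [hzero v hv]; ring),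
      hpair _ (by intro v hv; rw [hzero v hv]; ring)]
  rw [hval um (Or.inl rfl), hval up (Or.inr rfl)]
  rw [hammingDist'_self, hammingDist'_self, hammingDist'_opp, hammingDist'_opp']
  simp [hWeight, hθF]
  ring

lemma biasedDist_nonneg (F : ℕ) (hF0 : 0 < F) {ρ : ℝ} (hρ : 0 < ρ) (hρ' : ρ ≤ 1 / 2 ^ F)
    (u : Fin F → Bool) : 0 ≤ biasedDist F ρ u := by
  unfold biasedDist
  split
  · have h2F : (0:ℝ) < 2 ^ F := by positivity
    have hpow : (2:ℝ) ^ (F - 1) * 2 = 2 ^ F := by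
      rw [← pow_succ]
      congr 1
      omega
    have hpownn : (0:ℝ) < 2 ^ (F-1) := by positivity
    have key : (2:ℝ) ^ (F-1) * ρ ≤ 1/2 := by
      have h1 : (2:ℝ)^(F-1) * ρ ≤ 2^(F-1) * (1/2^F) :=
        mul_le_mul_of_nonneg_left hρ' (le_of_lt hpownn)
      have h2 : (2:ℝ)^(F-1) * (1/2^F) = 1/2 := by
        field_simp
        linarith [hpow]
      linarith
    nlinarith [hρ.le]
  · exact le_of_lt hρ

lemma integral_eq_gsum (F θ : ℕ) {ρ : ℝ} (hnn : ∀ u, 0 ≤ biasedDist F ρ u)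
    (Ω : Type*) [MeasureSpace Ω] (hP : IsProbabilityMeasure (ℙ : Measure Ω))
    (X Y : Ω → (Fin F → Bool)) (hX : Measurable X) (hY : Measurable Y)
    (hind : IndepFun X Y)
    (hXd : ∀ u, ℙ (X ⁻¹' {u}) = ENNReal.ofReal (biasedDist F ρ u))
    (hYd : ∀ u, ℙ (Y ⁻¹' {u}) = ENNReal.ofReal (biasedDist F ρ u)) :
    ∫ ω, hWeight θ (hammingDist' (X ω) (Y ω)) ∂ℙ = gsum F θ ρ := by
  set Z : Ω → (Fin F → Bool) × (Fin F → Bool) := fun ω => (X ω, Y ω) with hZdef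
  have hZ : Measurable Z := hX.prodMk hY
  set f : (Fin F → Bool) × (Fin F → Bool) → ℝ :=
    fun p => hWeight θ (hammingDist' p.1 p.2) with hfdef
  have hf : Measurable f := measurable_of_countable f
  have h1 : ∫ ω, hWeight θ (hammingDist' (X ω) (Y ω)) ∂ℙ
      = ∫ p, f p ∂(Measure.map Z ℙ) := by
    rw [integral_map hZ.aemeasurable hf.aestronglyMeasurable]
  have hmap : IsProbabilityMeasure (Measure.map Z ℙ) :=
    Measure.isProbabilityMeasure_map hZ.aemeasurable
  rw [h1, integral_fintype (f := f) .of_finite]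
  rw [Fintype.sum_prod_type]
  unfold gsum
  apply Finset.sum_congr rfl
  intro u _
  apply Finset.sum_congr rfl
  intro v _
  have hpre : Z ⁻¹' {(u, v)} = X ⁻¹' {u} ∩ Y ⁻¹' {v} := by
    ext ω
    simp [hZdef, Prod.ext_iff]
  rw [measureReal_def, Measure.map_apply hZ (measurableSet_singleton _), hpre,
    hind.measure_inter_preimage_eq_mul {u} {v} (measurableSet_singleton _)
      (measurableSet_singleton _), hXd, hYd,
    ENNReal.toReal_mul, ENNReal.toReal_ofReal (hnn u), ENNReal.toReal_ofReal (hnn v)]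
  simp [hfdef, smul_eq_mul]

theorem biased_expected_weight_pos (F θ : ℕ) (hθ : 1 ≤ θ) (hF : 2 * θ < F) :
    ∃ ρ₀ : ℝ, 0 < ρ₀ ∧ ρ₀ ≤ 1 / 2 ^ F ∧
      ∀ ρ : ℝ, 0 < ρ → ρ < ρ₀ →
        ∀ (Ω : Type*) [MeasureSpace Ω], IsProbabilityMeasure (ℙ : Measure Ω) →
          ∀ X Y : Ω → (Fin F → Bool), Measurable X → Measurable Y → IndepFun X Y →
            (∀ u, ℙ (X ⁻¹' {u}) = ENNReal.ofReal (biasedDist F ρ u)) →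
            (∀ u, ℙ (Y ⁻¹' {u}) = ENNReal.ofReal (biasedDist F ρ u)) →
            0 < ∫ ω, hWeight θ (hammingDist' (X ω) (Y ω)) ∂ℙ := by
  have hF0 : 0 < F := by omega
  have hg0 : 0 < gsum F θ 0 := by
    rw [gsum_zero F θ hθ hF]
    have : (2 * θ : ℝ) < F := by exact_mod_cast hF
    linarith
  have hc : ContinuousAt (gsum F θ) 0 := (gsum_continuous F θ).continuousAt
  rw [Metric.continuousAt_iff] at hc
  obtain ⟨δ, hδ, hδ'⟩ := hc (gsum F θ 0) hg0
  have h2F : (0:ℝ) < 1 / 2 ^ F := by positivity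
  refine ⟨min δ (1 / 2 ^ F), lt_min hδ h2F, min_le_right _ _, ?_⟩
  intro ρ hρ0 hρ1 Ω _ hP X Y hX hY hind hXd hYd
  have hρδ : ρ < δ := lt_of_lt_of_le hρ1 (min_le_left _ _)
  have hρ2F : ρ ≤ 1 / 2 ^ F := le_of_lt (lt_of_lt_of_le hρ1 (min_le_right _ _))
  have hgρ : 0 < gsum F θ ρ := by
    have : dist (gsum F θ ρ) (gsum F θ 0) < gsum F θ 0 := by
      apply hδ'
      rw [Real.dist_eq, sub_zero, abs_of_pos hρ0]
      exact hρδ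
    rw [Real.dist_eq, abs_lt] at this
    linarith [this.1]
  rw [integral_eq_gsum F θ (biasedDist_nonneg F hF0 hρ0 hρ2F) Ω hP X Y hX hY hind hXd hYd]
  exact hgρ
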